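/- Let t ≥ 2 be an integer, let G be a finite simple graph, and let G_{t'} be the graph obtained from G by replacing each edge (u,w) with two internally-disjoint paths from u to w: one with t internal vertices and one with t+1 internal vertices. Then G contains a triangle if and only if G_{t'} contains a cycle of length 3(t+1)+1. -/

import Mathlib

variable {V : Type*} [LinearOrder V]

/-- The smaller endpoint of an (unordered) edge. -/
def sMin (e : Sym2 V) : V := Sym2.lift ⟨fun a b => min a b, fun a b => min_comm a b⟩ e

/-- The larger endpoint of an (unordered) edge. -/
def sMax (e : Sym2 V) : V := Sym2.lift ⟨fun a b => max a b, fun a b => max_comm a b⟩ e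

/-- The graph `G_{t'}` obtained from `G` by replacing each edge `e = (u,w)` by two
internally disjoint paths from `u` to `w`: one with `t` internal vertices
(indexed by `Fin t`) and one with `t+1` internal vertices (indexed by `Fin (t+1)`). -/
def DoubleSubdiv (G : SimpleGraph V) (t : ℕ) :
    SimpleGraph (V ⊕ (G.edgeSet × (Fin t ⊕ Fin (t + 1)))) :=
  SimpleGraph.fromRel fun a b =>
    match a, b with
    | Sum.inl u, Sum.inr (e, Sum.inl i) =>
        (i.val = 0 ∧ u = sMin (e : Sym2 V)) ∨ (i.val = t - 1 ∧ u = sMax (e : Sym2 V))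
    | Sum.inl u, Sum.inr (e, Sum.inr j) =>
        (j.val = 0 ∧ u = sMin (e : Sym2 V)) ∨ (j.val = t ∧ u = sMax (e : Sym2 V))
    | Sum.inr (e, Sum.inl i), Sum.inr (e', Sum.inl i') =>
        (e : Sym2 V) = (e' : Sym2 V) ∧ i'.val = i.val + 1
    | Sum.inr (e, Sum.inr j), Sum.inr (e', Sum.inr j') =>
        (e : Sym2 V) = (e' : Sym2 V) ∧ j'.val = j.val + 1
    | _, _ => False

@[simp] lemma sMin_mk (a b : V) : sMin s(a, b) = min a b := rfl
@[simp] lemma sMax_mk (a b : V) : sMax s(a, b) = max a b := rfl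

section Basic

variable {G : SimpleGraph V} {t : ℕ}

lemma adj_sMin_sMax (e : G.edgeSet) : G.Adj (sMin (e : Sym2 V)) (sMax (e : Sym2 V)) := by
  obtain ⟨e, he⟩ := e
  induction e with
  | _ a b =>
    simp only [sMin_mk, sMax_mk]
    rw [SimpleGraph.mem_edgeSet] at he
    rcases le_total a b with h | h
    · rwa [min_eq_left h, max_eq_right h]
    · rw [min_eq_right h, max_eq_left h]; exact he.symm

lemma sMin_ne_sMax (e : G.edgeSet) : sMin (e : Sym2 V) ≠ sMax (e : Sym2 V) :=
  (adj_sMin_sMax e).ne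

lemma not_adj_inl_inl {u v : V} : ¬ (DoubleSubdiv G t).Adj (Sum.inl u) (Sum.inl v) := by
  rw [DoubleSubdiv, SimpleGraph.fromRel_adj]
  rintro ⟨-, h | h⟩ <;> exact h

lemma adj_inl_inrA {u : V} {e : G.edgeSet} {i : Fin t} :
    (DoubleSubdiv G t).Adj (Sum.inl u) (Sum.inr (e, Sum.inl i)) ↔
      ((i.val = 0 ∧ u = sMin (e : Sym2 V)) ∨ (i.val = t - 1 ∧ u = sMax (e : Sym2 V))) := by
  rw [DoubleSubdiv, SimpleGraph.fromRel_adj]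
  constructor
  · rintro ⟨-, h | h⟩
    · exact h
    · exact h.elim
  · intro h
    exact ⟨by simp, Or.inl h⟩

lemma adj_inl_inrB {u : V} {e : G.edgeSet} {j : Fin (t+1)} :
    (DoubleSubdiv G t).Adj (Sum.inl u) (Sum.inr (e, Sum.inr j)) ↔
      ((j.val = 0 ∧ u = sMin (e : Sym2 V)) ∨ (j.val = t ∧ u = sMax (e : Sym2 V))) := by
  rw [DoubleSubdiv, SimpleGraph.fromRel_adj]
  constructor
  · rintro ⟨-, h | h⟩
    · exact h
    · exact h.elim
  · intro h
    exact ⟨by simp, Or.inl h⟩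

lemma adj_inrA_inrA {e e' : G.edgeSet} {i i' : Fin t} :
    (DoubleSubdiv G t).Adj (Sum.inr (e, Sum.inl i)) (Sum.inr (e', Sum.inl i')) ↔
      (e = e' ∧ (i'.val = i.val + 1 ∨ i.val = i'.val + 1)) := by
  rw [DoubleSubdiv, SimpleGraph.fromRel_adj]
  constructor
  · rintro ⟨-, ⟨he, h⟩ | ⟨he, h⟩⟩
    · exact ⟨Subtype.ext he, Or.inl h⟩
    · exact ⟨(Subtype.ext he).symm, Or.inr h⟩
  · rintro ⟨rfl, h | h⟩
    · exact ⟨by simp [Fin.ext_iff]; omega, Or.inl ⟨rfl, h⟩⟩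
    · exact ⟨by simp [Fin.ext_iff]; omega, Or.inr ⟨rfl, h⟩⟩

lemma adj_inrB_inrB {e e' : G.edgeSet} {j j' : Fin (t+1)} :
    (DoubleSubdiv G t).Adj (Sum.inr (e, Sum.inr j)) (Sum.inr (e', Sum.inr j')) ↔
      (e = e' ∧ (j'.val = j.val + 1 ∨ j.val = j'.val + 1)) := by
  rw [DoubleSubdiv, SimpleGraph.fromRel_adj]
  constructor
  · rintro ⟨-, ⟨he, h⟩ | ⟨he, h⟩⟩
    · exact ⟨Subtype.ext he, Or.inl h⟩
    · exact ⟨(Subtype.ext he).symm, Or.inr h⟩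
  · rintro ⟨rfl, h | h⟩
    · exact ⟨by simp [Fin.ext_iff]; omega, Or.inl ⟨rfl, h⟩⟩
    · exact ⟨by simp [Fin.ext_iff]; omega, Or.inr ⟨rfl, h⟩⟩

lemma not_adj_inrA_inrB {e e' : G.edgeSet} {i : Fin t} {j : Fin (t+1)} :
    ¬ (DoubleSubdiv G t).Adj (Sum.inr (e, Sum.inl i)) (Sum.inr (e', Sum.inr j)) := by
  rw [DoubleSubdiv, SimpleGraph.fromRel_adj]
  rintro ⟨-, h | h⟩ <;> exact h

end Basic

section Corridor

variable {G : SimpleGraph V} {t : ℕ}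

/-- classification of neighbours of an internal vertex on the `Fin t` side -/
lemma adj_to_inrA {x} {e : G.edgeSet} {i : Fin t}
    (h : (DoubleSubdiv G t).Adj x (Sum.inr (e, Sum.inl i))) :
    (i.val = 0 ∧ x = Sum.inl (sMin (e : Sym2 V))) ∨
    (i.val = t - 1 ∧ x = Sum.inl (sMax (e : Sym2 V))) ∨
    (∃ i' : Fin t, x = Sum.inr (e, Sum.inl i') ∧ (i'.val = i.val + 1 ∨ i.val = i'.val + 1)) := by
  match x with
  | Sum.inl u =>
    rcases adj_inl_inrA.1 h with ⟨h1, rfl⟩ | ⟨h1, rfl⟩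
    · exact Or.inl ⟨h1, rfl⟩
    · exact Or.inr (Or.inl ⟨h1, rfl⟩)
  | Sum.inr (e', Sum.inl i') =>
    rcases adj_inrA_inrA.1 h with ⟨rfl, h2⟩
    exact Or.inr (Or.inr ⟨i', rfl, by omega⟩)
  | Sum.inr (e', Sum.inr j') => exact absurd h.symm not_adj_inrA_inrB

lemma adj_to_inrB {x} {e : G.edgeSet} {j : Fin (t+1)}
    (h : (DoubleSubdiv G t).Adj x (Sum.inr (e, Sum.inr j))) :
    (j.val = 0 ∧ x = Sum.inl (sMin (e : Sym2 V))) ∨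
    (j.val = t ∧ x = Sum.inl (sMax (e : Sym2 V))) ∨
    (∃ j' : Fin (t+1), x = Sum.inr (e, Sum.inr j') ∧ (j'.val = j.val + 1 ∨ j.val = j'.val + 1)) := by
  match x with
  | Sum.inl u =>
    rcases adj_inl_inrB.1 h with ⟨h1, rfl⟩ | ⟨h1, rfl⟩
    · exact Or.inl ⟨h1, rfl⟩
    · exact Or.inr (Or.inl ⟨h1, rfl⟩)
  | Sum.inr (e', Sum.inr j') =>
    rcases adj_inrB_inrB.1 h with ⟨rfl, h2⟩
    exact Or.inr (Or.inr ⟨j', rfl, by omega⟩)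
  | Sum.inr (e', Sum.inl i') => exact absurd h not_adj_inrA_inrB

lemma adj_from_inl {a : V} {y} (h : (DoubleSubdiv G t).Adj (Sum.inl a) y) :
    ∃ e : G.edgeSet, (∃ i : Fin t, y = Sum.inr (e, Sum.inl i) ∧
        ((i.val = 0 ∧ a = sMin (e : Sym2 V)) ∨ (i.val = t - 1 ∧ a = sMax (e : Sym2 V)))) ∨
      (∃ j : Fin (t+1), y = Sum.inr (e, Sum.inr j) ∧
        ((j.val = 0 ∧ a = sMin (e : Sym2 V)) ∨ (j.val = t ∧ a = sMax (e : Sym2 V)))) := by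
  match y with
  | Sum.inl u => exact absurd h not_adj_inl_inl
  | Sum.inr (e, Sum.inl i) => exact ⟨e, Or.inl ⟨i, rfl, adj_inl_inrA.1 h⟩⟩
  | Sum.inr (e, Sum.inr j) => exact ⟨e, Or.inr ⟨j, rfl, adj_inl_inrB.1 h⟩⟩

/-- Generic corridor-walking lemma: if from position 1 onwards a walk enters a "corridor"
(a sequence of vertices each of whose neighbours are exactly the previous and next ones),
then the walk is forced to traverse the whole corridor. -/
lemma corridorAux {W' : Type*} {H : SimpleGraph W'} {n : ℕ} (f : ℕ → W')
    (hadj : ∀ m, H.Adj (f m) (f (m+1)))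
    (hinj : ∀ i j, f i = f j → i % n = j % n)
    {L : ℕ} (hL : 1 ≤ L) (hLn : L + 1 < n) (P : ℕ → W') {A B : W'}
    (h0 : f 0 = A) (h1 : f 1 = P 0)
    (hnbr : ∀ m, m + 1 ≤ L → ∀ x, H.Adj x (P m) →
      x = (if m = 0 then A else P (m-1)) ∨ x = (if m + 1 = L then B else P (m+1))) :
    (∀ m, 1 ≤ m → m ≤ L → f m = P (m-1)) ∧ f (L+1) = B := by
  have hne : ∀ i j : ℕ, i < n → j < n → i ≠ j → f i ≠ f j := by
    intro i j hi hj hij hf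
    have := hinj i j hf
    rw [Nat.mod_eq_of_lt hi, Nat.mod_eq_of_lt hj] at this
    exact hij this
  have key : ∀ m, 1 ≤ m → m ≤ L → f m = P (m-1) := by
    intro m hm1 hmL
    induction m using Nat.strong_induction_on with
    | _ m ih =>
      match m, hm1, hmL with
      | 1, _, _ => simpa using h1
      | (m+2), _, hmL =>
        have hfm : f (m+1) = P m := by
          have := ih (m+1) (by omega) (by omega) (by omega)
          simpa using this
        have hprev : f m = (if m = 0 then A else P (m-1)) := by
          rcases Nat.eq_zero_or_pos m with rfl | hpos
          · simpa using h0
          · rw [if_neg (by omega)]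
            exact ih m (by omega) (by omega) (by omega)
        have hadj' : H.Adj (f (m+2)) (P m) := by
          rw [← hfm]; exact (hadj (m+1)).symm
        rcases hnbr m (by omega) _ hadj' with hx | hx
        · exact absurd (hx.trans hprev.symm)
            (hne (m+2) m (by omega) (by omega) (by omega))
        · rw [show m + 2 - 1 = m + 1 from rfl, hx, if_neg (by omega)]
  refine ⟨key, ?_⟩
  have hfL : f L = P (L-1) := key L hL le_rfl
  have hprev : f (L-1) = (if L - 1 = 0 then A else P (L-1-1)) := by
    rcases Nat.eq_or_lt_of_le hL with h | h
    · rw [if_pos (by omega)]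
      have : L - 1 = 0 := by omega
      rw [this, h0]
    · rw [if_neg (by omega)]
      exact key (L-1) (by omega) (by omega)
  have hadj' : H.Adj (f (L+1)) (P (L-1)) := by
    rw [← hfL]; exact (hadj L).symm
  rcases hnbr (L-1) (by omega) _ hadj' with hx | hx
  · exact absurd (hx.trans hprev.symm)
      (hne (L+1) (L-1) (by omega) (by omega) (by omega))
  · rwa [if_pos (by omega)] at hx

end Corridor

section MainCorridor

variable {G : SimpleGraph V} {t : ℕ}

lemma corridor (ht : 2 ≤ t) (c : ℕ → (V ⊕ (G.edgeSet × (Fin t ⊕ Fin (t+1)))))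
    (hadj : ∀ m, (DoubleSubdiv G t).Adj (c m) (c (m+1)))
    (hinj : ∀ i j, c i = c j → i % (3*t+4) = j % (3*t+4))
    (i : ℕ) (a : V) (hca : c i = Sum.inl a) :
    ∃ b d, (d = t+1 ∨ d = t+2) ∧ c (i+d) = Sum.inl b ∧ G.Adj a b ∧
      ∀ m, 0 < m → m < d → ∀ v : V, c (i+m) ≠ Sum.inl v := by
  set f : ℕ → (V ⊕ (G.edgeSet × (Fin t ⊕ Fin (t+1)))) := fun m => c (i+m) with hf
  have hadj_f : ∀ m, (DoubleSubdiv G t).Adj (f m) (f (m+1)) := by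
    intro m
    have := hadj (i+m)
    simpa [hf, Nat.add_assoc] using this
  have hinj_f : ∀ i' j', f i' = f j' → i' % (3*t+4) = j' % (3*t+4) := by
    intro i' j' h
    exact Nat.ModEq.add_left_cancel' i (hinj (i+i') (i+j') h)
  have h0 : f 0 = Sum.inl a := by simpa [hf] using hca
  have hadj1 : (DoubleSubdiv G t).Adj (Sum.inl a) (f 1) := by
    have := hadj_f 0
    rwa [h0] at this
  obtain ⟨e, he⟩ := adj_from_inl hadj1
  rcases he with ⟨i0, hi0, ⟨hi0v, rfl⟩ | ⟨hi0v, rfl⟩⟩ | ⟨j0, hj0, ⟨hj0v, rfl⟩ | ⟨hj0v, rfl⟩⟩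
  · -- case A1 : enter Fin t side at 0, a = sMin e
    set P : ℕ → (V ⊕ (G.edgeSet × (Fin t ⊕ Fin (t+1)))) :=
      fun m => Sum.inr (e, Sum.inl ⟨m % t, Nat.mod_lt m (by omega)⟩) with hP
    have h1 : f 1 = P 0 := by
      rw [hi0]
      simp only [hP, Sum.inr.injEq, Prod.mk.injEq, Sum.inl.injEq, true_and, Fin.ext_iff]
      simp [hi0v]
    have hnbr : ∀ m, m + 1 ≤ t → ∀ x, (DoubleSubdiv G t).Adj x (P m) →
        x = (if m = 0 then Sum.inl (sMin (e : Sym2 V)) else P (m-1)) ∨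
        x = (if m + 1 = t then Sum.inl (sMax (e : Sym2 V)) else P (m+1)) := by
      intro m hm x hx
      rw [hP] at hx
      have hmt : m % t = m := Nat.mod_eq_of_lt (by omega)
      rcases adj_to_inrA hx with ⟨h1', h2'⟩ | ⟨h1', h2'⟩ | ⟨i', h1', h2'⟩
      · left; rw [if_pos (by simp only [Fin.val_mk, hmt] at h1'; omega), h2']
      · right; rw [if_pos (by simp only [Fin.val_mk, hmt] at h1'; omega), h2']
      · simp only [Fin.val_mk, hmt] at h2'
        rcases h2' with h2' | h2'
        · right
          have hlt : m + 1 < t := by have := i'.isLt; omega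
          rw [if_neg (by omega), h1']
          simp only [hP, Sum.inr.injEq, Prod.mk.injEq, Sum.inl.injEq, true_and, Fin.ext_iff,
            Fin.val_mk]
          rw [Nat.mod_eq_of_lt hlt]; omega
        · left
          rw [if_neg (by omega), h1']
          simp only [hP, Sum.inr.injEq, Prod.mk.injEq, Sum.inl.injEq, true_and, Fin.ext_iff,
            Fin.val_mk]
          rw [Nat.mod_eq_of_lt (show m - 1 < t by omega)]; omega
    obtain ⟨hint, hend⟩ := corridorAux f hadj_f hinj_f (show 1 ≤ t by omega)
      (show t + 1 < 3*t+4 by omega) P h0 h1 hnbr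
    refine ⟨sMax (e : Sym2 V), t+1, Or.inl rfl, hend, adj_sMin_sMax e, ?_⟩
    intro m hm1 hm2 v
    show f m ≠ Sum.inl v
    rw [hint m hm1 (by omega), hP]
    simp
  · -- case A2 : enter Fin t side at t-1, a = sMax e
    set P : ℕ → (V ⊕ (G.edgeSet × (Fin t ⊕ Fin (t+1)))) :=
      fun m => Sum.inr (e, Sum.inl ⟨(t-1-m) % t, Nat.mod_lt _ (by omega)⟩) with hP
    have h1 : f 1 = P 0 := by
      rw [hi0]
      simp only [hP, Sum.inr.injEq, Prod.mk.injEq, Sum.inl.injEq, true_and, Fin.ext_iff,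
        Fin.val_mk]
      rw [Nat.mod_eq_of_lt (show t-1-0 < t by omega)]; omega
    have hnbr : ∀ m, m + 1 ≤ t → ∀ x, (DoubleSubdiv G t).Adj x (P m) →
        x = (if m = 0 then Sum.inl (sMax (e : Sym2 V)) else P (m-1)) ∨
        x = (if m + 1 = t then Sum.inl (sMin (e : Sym2 V)) else P (m+1)) := by
      intro m hm x hx
      rw [hP] at hx
      have hmt : (t-1-m) % t = t-1-m := Nat.mod_eq_of_lt (by omega)
      rcases adj_to_inrA hx with ⟨h1', h2'⟩ | ⟨h1', h2'⟩ | ⟨i', h1', h2'⟩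
      · right; rw [if_pos (by simp only [Fin.val_mk, hmt] at h1'; omega), h2']
      · left; rw [if_pos (by simp only [Fin.val_mk, hmt] at h1'; omega), h2']
      · simp only [Fin.val_mk, hmt] at h2'
        rcases h2' with h2' | h2'
        · left
          have hm0 : ¬ (m = 0) := by have := i'.isLt; omega
          rw [if_neg hm0, h1']
          simp only [hP, Sum.inr.injEq, Prod.mk.injEq, Sum.inl.injEq, true_and, Fin.ext_iff,
            Fin.val_mk]
          rw [Nat.mod_eq_of_lt (show t-1-(m-1) < t by omega)]; omega
        · right
          rw [if_neg (by omega), h1']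
          simp only [hP, Sum.inr.injEq, Prod.mk.injEq, Sum.inl.injEq, true_and, Fin.ext_iff,
            Fin.val_mk]
          rw [Nat.mod_eq_of_lt (show t-1-(m+1) < t by omega)]; omega
    obtain ⟨hint, hend⟩ := corridorAux f hadj_f hinj_f (show 1 ≤ t by omega)
      (show t + 1 < 3*t+4 by omega) P h0 h1 hnbr
    refine ⟨sMin (e : Sym2 V), t+1, Or.inl rfl, hend, (adj_sMin_sMax e).symm, ?_⟩
    intro m hm1 hm2 v
    show f m ≠ Sum.inl v
    rw [hint m hm1 (by omega), hP]
    simp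
  · -- case B1 : enter Fin (t+1) side at 0, a = sMin e
    set P : ℕ → (V ⊕ (G.edgeSet × (Fin t ⊕ Fin (t+1)))) :=
      fun m => Sum.inr (e, Sum.inr ⟨m % (t+1), Nat.mod_lt m (by omega)⟩) with hP
    have h1 : f 1 = P 0 := by
      rw [hj0]
      simp only [hP, Sum.inr.injEq, Prod.mk.injEq, true_and, Fin.ext_iff]
      simp [hj0v]
    have hnbr : ∀ m, m + 1 ≤ t+1 → ∀ x, (DoubleSubdiv G t).Adj x (P m) →
        x = (if m = 0 then Sum.inl (sMin (e : Sym2 V)) else P (m-1)) ∨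
        x = (if m + 1 = t+1 then Sum.inl (sMax (e : Sym2 V)) else P (m+1)) := by
      intro m hm x hx
      rw [hP] at hx
      have hmt : m % (t+1) = m := Nat.mod_eq_of_lt (by omega)
      rcases adj_to_inrB hx with ⟨h1', h2'⟩ | ⟨h1', h2'⟩ | ⟨j', h1', h2'⟩
      · left; rw [if_pos (by simp only [Fin.val_mk, hmt] at h1'; omega), h2']
      · right; rw [if_pos (by simp only [Fin.val_mk, hmt] at h1'; omega), h2']
      · simp only [Fin.val_mk, hmt] at h2'
        rcases h2' with h2' | h2'
        · right
          have hlt : m + 1 < t + 1 := by have := j'.isLt; omega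
          rw [if_neg (by omega), h1']
          simp only [hP, Sum.inr.injEq, Prod.mk.injEq, true_and, Fin.ext_iff, Fin.val_mk]
          rw [Nat.mod_eq_of_lt hlt]; omega
        · left
          rw [if_neg (by omega), h1']
          simp only [hP, Sum.inr.injEq, Prod.mk.injEq, true_and, Fin.ext_iff, Fin.val_mk]
          rw [Nat.mod_eq_of_lt (show m - 1 < t + 1 by omega)]; omega
    obtain ⟨hint, hend⟩ := corridorAux f hadj_f hinj_f (show 1 ≤ t+1 by omega)
      (show t + 1 + 1 < 3*t+4 by omega) P h0 h1 hnbr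
    refine ⟨sMax (e : Sym2 V), t+2, Or.inr rfl, hend, adj_sMin_sMax e, ?_⟩
    intro m hm1 hm2 v
    show f m ≠ Sum.inl v
    rw [hint m hm1 (by omega), hP]
    simp
  · -- case B2 : enter Fin (t+1) side at t, a = sMax e
    set P : ℕ → (V ⊕ (G.edgeSet × (Fin t ⊕ Fin (t+1)))) :=
      fun m => Sum.inr (e, Sum.inr ⟨(t-m) % (t+1), Nat.mod_lt _ (by omega)⟩) with hP
    have h1 : f 1 = P 0 := by
      rw [hj0]
      simp only [hP, Sum.inr.injEq, Prod.mk.injEq, true_and, Fin.ext_iff, Fin.val_mk]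
      rw [Nat.mod_eq_of_lt (show t-0 < t+1 by omega)]; omega
    have hnbr : ∀ m, m + 1 ≤ t+1 → ∀ x, (DoubleSubdiv G t).Adj x (P m) →
        x = (if m = 0 then Sum.inl (sMax (e : Sym2 V)) else P (m-1)) ∨
        x = (if m + 1 = t+1 then Sum.inl (sMin (e : Sym2 V)) else P (m+1)) := by
      intro m hm x hx
      rw [hP] at hx
      have hmt : (t-m) % (t+1) = t-m := Nat.mod_eq_of_lt (by omega)
      rcases adj_to_inrB hx with ⟨h1', h2'⟩ | ⟨h1', h2'⟩ | ⟨j', h1', h2'⟩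
      · right; rw [if_pos (by simp only [Fin.val_mk, hmt] at h1'; omega), h2']
      · left; rw [if_pos (by simp only [Fin.val_mk, hmt] at h1'; omega), h2']
      · simp only [Fin.val_mk, hmt] at h2'
        rcases h2' with h2' | h2'
        · left
          have hm0 : ¬ (m = 0) := by have := j'.isLt; omega
          rw [if_neg hm0, h1']
          simp only [hP, Sum.inr.injEq, Prod.mk.injEq, true_and, Fin.ext_iff, Fin.val_mk]
          rw [Nat.mod_eq_of_lt (show t-(m-1) < t+1 by omega)]; omega
        · right
          rw [if_neg (by omega), h1']
          simp only [hP, Sum.inr.injEq, Prod.mk.injEq, true_and, Fin.ext_iff, Fin.val_mk]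
          rw [Nat.mod_eq_of_lt (show t-(m+1) < t+1 by omega)]; omega
    obtain ⟨hint, hend⟩ := corridorAux f hadj_f hinj_f (show 1 ≤ t+1 by omega)
      (show t + 1 + 1 < 3*t+4 by omega) P h0 h1 hnbr
    refine ⟨sMin (e : Sym2 V), t+2, Or.inr rfl, hend, (adj_sMin_sMax e).symm, ?_⟩
    intro m hm1 hm2 v
    show f m ≠ Sum.inl v
    rw [hint m hm1 (by omega), hP]
    simp

end MainCorridor

section CycleInfra

variable {W' : Type*} {H : SimpleGraph W'}

lemma support_getElem_eq_getVert {u v : W'} (p : H.Walk u v) :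
    ∀ m (h : m < p.support.length), p.support[m] = p.getVert m := by
  induction p with
  | nil => intro m h; simp at h; subst h; rfl
  | cons hadj q ih =>
    intro m h
    cases m with
    | zero => rfl
    | succ m =>
      simp only [SimpleGraph.Walk.support_cons, List.getElem_cons_succ,
        SimpleGraph.Walk.getVert_cons_succ]
      exact ih m (by simpa [SimpleGraph.Walk.length_support] using h)

lemma cycle_getVert_inj {x : W'} {w : H.Walk x x} (hc : w.IsCycle)
    {i j : ℕ} (hi : i < w.length) (hj : j < w.length)
    (h : w.getVert i = w.getVert j) : i = j := by
  have hnd : w.support.tail.Nodup := ((SimpleGraph.Walk.isCycle_def w).1 hc).2.2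
  have hlen3 : 3 ≤ w.length := hc.three_le_length
  have hlsupp : w.support.length = w.length + 1 := SimpleGraph.Walk.length_support w
  have hltail : w.support.tail.length = w.length := by
    rw [List.length_tail, hlsupp]; omega
  have htail : ∀ m (hm : m < w.length), w.support.tail[m]'(by omega) = w.getVert (m+1) := by
    intro m hm
    rw [List.getElem_tail, support_getElem_eq_getVert w (m+1) (by omega)]
  -- tail entries are getVert 1 .. getVert length
  have key : ∀ {a b : ℕ}, 1 ≤ a → a ≤ w.length → 1 ≤ b → b ≤ w.length →
      w.getVert a = w.getVert b → a = b := by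
    intro a b ha1 ha2 hb1 hb2 hab
    have h1 : w.support.tail[a-1]'(by omega) = w.support.tail[b-1]'(by omega) := by
      rw [htail (a-1) (by omega), htail (b-1) (by omega)]
      have : a - 1 + 1 = a := by omega
      rw [this]
      have : b - 1 + 1 = b := by omega
      rw [this]
      exact hab
    have := (List.Nodup.getElem_inj_iff hnd).1 h1
    omega
  rcases Nat.eq_zero_or_pos i with rfl | hi1
  · rcases Nat.eq_zero_or_pos j with rfl | hj1
    · rfl
    · exfalso
      have hx0 : w.getVert w.length = w.getVert 0 := by
        rw [SimpleGraph.Walk.getVert_length, SimpleGraph.Walk.getVert_zero]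
      have := key hj1 (le_of_lt hj) (by omega) le_rfl (h.symm.trans hx0.symm)
      omega
  · rcases Nat.eq_zero_or_pos j with rfl | hj1
    · exfalso
      have hx0 : w.getVert w.length = w.getVert 0 := by
        rw [SimpleGraph.Walk.getVert_length, SimpleGraph.Walk.getVert_zero]
      have := key hi1 (le_of_lt hi) (by omega) le_rfl (h.trans hx0.symm)
      omega
    · exact key hi1 (le_of_lt hi) hj1 (le_of_lt hj) h

end CycleInfra

section Backward

variable {G : SimpleGraph V} {t : ℕ}

lemma backward_dir (ht : 2 ≤ t) {x : V ⊕ (G.edgeSet × (Fin t ⊕ Fin (t+1)))}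
    {w : (DoubleSubdiv G t).Walk x x} (hc : w.IsCycle) (hlen : w.length = 3*t+4) :
    ∃ a b c : V, G.Adj a b ∧ G.Adj b c ∧ G.Adj c a := by
  set n : ℕ := 3*t+4 with hn
  have hn10 : 10 ≤ n := by omega
  have h1n : 1 % n = 1 := Nat.mod_eq_of_lt (by omega)
  set c0 : ℕ → (V ⊕ (G.edgeSet × (Fin t ⊕ Fin (t+1)))) := fun m => w.getVert (m % n) with hc0
  have hmod : ∀ m, c0 m = c0 (m % n) := by
    intro m
    have h2 : m % n % n = m % n := Nat.mod_mod_of_dvd _ dvd_rfl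
    simp [hc0, h2]
  have hper : ∀ m, c0 (m + n) = c0 m := by
    intro m; simp [hc0, Nat.add_mod_right]
  have hadj : ∀ m, (DoubleSubdiv G t).Adj (c0 m) (c0 (m+1)) := by
    intro m
    have hr : m % n < n := Nat.mod_lt _ (by omega)
    rcases Nat.lt_or_ge (m % n + 1) n with h | h
    · have h2 : (m+1) % n = m % n + 1 := by
        rw [Nat.add_mod, h1n, Nat.mod_eq_of_lt h]
      rw [hc0]
      simp only [h2]
      exact w.adj_getVert_succ (by omega)
    · have hrn : m % n = n - 1 := by omega
      have h2 : (m+1) % n = 0 := by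
        rw [Nat.add_mod, h1n, hrn, show n - 1 + 1 = n from by omega, Nat.mod_self]
      rw [hc0]
      simp only [h2, hrn]
      have h3 : w.getVert (n - 1 + 1) = w.getVert 0 := by
        rw [show n - 1 + 1 = n from by omega, SimpleGraph.Walk.getVert_zero,
          ← hlen, SimpleGraph.Walk.getVert_length]
      rw [← h3]
      exact w.adj_getVert_succ (by rw [hlen]; omega)
  have hinj : ∀ i j, c0 i = c0 j → i % n = j % n := by
    intro i j h
    exact cycle_getVert_inj hc (by rw [hlen]; exact Nat.mod_lt _ (by omega))
      (by rw [hlen]; exact Nat.mod_lt _ (by omega)) h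
  -- Step 1: some vertex of the cycle lies in `V`
  have hex : ∃ i a, c0 i = Sum.inl a := by
    by_contra hcon
    push_neg at hcon
    set val : (V ⊕ (G.edgeSet × (Fin t ⊕ Fin (t+1)))) → ℕ :=
      fun y => Sum.elim (fun _ => 0) (fun p => Sum.elim Fin.val Fin.val p.2) y with hval
    obtain ⟨i0, -, hmax⟩ := Finset.exists_max_image (Finset.range n) (fun i => val (c0 i))
      ⟨0, Finset.mem_range.mpr (by omega)⟩
    have hmax' : ∀ j, val (c0 j) ≤ val (c0 i0) := by
      intro j
      rw [hmod j]
      exact hmax _ (by simp only [Finset.mem_range]; exact Nat.mod_lt _ (by omega))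
    have hy1 : (DoubleSubdiv G t).Adj (c0 (i0+1)) (c0 i0) := (hadj i0).symm
    have hy2 : (DoubleSubdiv G t).Adj (c0 (i0 + (n-1))) (c0 i0) := by
      have := hadj (i0 + (n-1))
      have h2 : i0 + (n-1) + 1 = i0 + n := by omega
      rwa [h2, hper i0] at this
    have hne12 : c0 (i0+1) ≠ c0 (i0 + (n-1)) := by
      intro h
      have h2 : (i0+1) ≡ (i0 + (n-1)) [MOD n] := hinj _ _ h
      have h3 : 1 ≡ (n-1) [MOD n] := Nat.ModEq.add_left_cancel' i0 h2
      rw [Nat.modEq_iff_dvd' (by omega)] at h3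
      have := Nat.le_of_dvd (by omega) h3
      omega
    match hi0 : c0 i0 with
    | Sum.inl a => exact hcon i0 a hi0
    | Sum.inr (e, Sum.inl iv) =>
      have step : ∀ y, (DoubleSubdiv G t).Adj y (c0 i0) →
          (∀ a : V, y ≠ Sum.inl a) → val y ≤ iv.val →
          ∃ i' : Fin t, y = Sum.inr (e, Sum.inl i') ∧ iv.val = i'.val + 1 := by
        intro y hy hynotinl hyval
        rw [hi0] at hy
        rcases adj_to_inrA hy with ⟨h1', h2'⟩ | ⟨h1', h2'⟩ | ⟨i', h1', h2'⟩
        · exact absurd h2' (hynotinl _)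
        · exact absurd h2' (hynotinl _)
        · refine ⟨i', h1', ?_⟩
          rcases h2' with h2' | h2'
          · exfalso
            rw [h1'] at hyval
            simp only [hval, Sum.elim_inr, Sum.elim_inl] at hyval
            omega
          · exact h2'
      have hv1 : val (c0 (i0+1)) ≤ iv.val := by
        have := hmax' (i0+1)
        rw [hi0] at this
        simpa only [hval, Sum.elim_inr, Sum.elim_inl] using this
      have hv2 : val (c0 (i0+(n-1))) ≤ iv.val := by
        have := hmax' (i0+(n-1))
        rw [hi0] at this
        simpa only [hval, Sum.elim_inr, Sum.elim_inl] using this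
      obtain ⟨i1, hy1eq, hi1v⟩ := step _ hy1 (fun a => hcon _ a) hv1
      obtain ⟨i2, hy2eq, hi2v⟩ := step _ hy2 (fun a => hcon _ a) hv2
      have : i1 = i2 := Fin.ext (by omega)
      exact hne12 (by rw [hy1eq, hy2eq, this])
    | Sum.inr (e, Sum.inr jv) =>
      have step : ∀ y, (DoubleSubdiv G t).Adj y (c0 i0) →
          (∀ a : V, y ≠ Sum.inl a) → val y ≤ jv.val →
          ∃ j' : Fin (t+1), y = Sum.inr (e, Sum.inr j') ∧ jv.val = j'.val + 1 := by
        intro y hy hynotinl hyval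
        rw [hi0] at hy
        rcases adj_to_inrB hy with ⟨h1', h2'⟩ | ⟨h1', h2'⟩ | ⟨j', h1', h2'⟩
        · exact absurd h2' (hynotinl _)
        · exact absurd h2' (hynotinl _)
        · refine ⟨j', h1', ?_⟩
          rcases h2' with h2' | h2'
          · exfalso
            rw [h1'] at hyval
            simp only [hval, Sum.elim_inr, Sum.elim_inl] at hyval
            omega
          · exact h2'
      have hv1 : val (c0 (i0+1)) ≤ jv.val := by
        have := hmax' (i0+1)
        rw [hi0] at this
        simpa only [hval, Sum.elim_inr, Sum.elim_inl] using this
      have hv2 : val (c0 (i0+(n-1))) ≤ jv.val := by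
        have := hmax' (i0+(n-1))
        rw [hi0] at this
        simpa only [hval, Sum.elim_inr, Sum.elim_inl] using this
      obtain ⟨j1, hy1eq, hj1v⟩ := step _ hy1 (fun a => hcon _ a) hv1
      obtain ⟨j2, hy2eq, hj2v⟩ := step _ hy2 (fun a => hcon _ a) hv2
      have : j1 = j2 := Fin.ext (by omega)
      exact hne12 (by rw [hy1eq, hy2eq, this])
  -- Step 2: rotate and walk three corridors
  obtain ⟨ia, a, hia⟩ := hex
  set c1 : ℕ → (V ⊕ (G.edgeSet × (Fin t ⊕ Fin (t+1)))) := fun m => c0 (ia + m) with hc1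
  have hadj1 : ∀ m, (DoubleSubdiv G t).Adj (c1 m) (c1 (m+1)) := by
    intro m
    have := hadj (ia + m)
    simpa [hc1, Nat.add_assoc] using this
  have hinj1 : ∀ i j, c1 i = c1 j → i % (3*t+4) = j % (3*t+4) := by
    intro i j h
    exact Nat.ModEq.add_left_cancel' ia (hinj (ia+i) (ia+j) h)
  have h0 : c1 0 = Sum.inl a := by simpa [hc1] using hia
  have hc1n : c1 n = Sum.inl a := by
    rw [hc1]
    simp only []
    rw [hper ia]  -- c0 (ia + n) -- careful: need c0 (ia + n) = c0 ia
    exact hia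
  obtain ⟨b, d1, hd1, hb, hab, hint1⟩ := corridor ht c1 hadj1 hinj1 0 a h0
  rw [Nat.zero_add] at hb
  have hbd1 : c1 d1 = Sum.inl b := hb
  obtain ⟨cv, d2, hd2, hcv, hbc, hint2⟩ := corridor ht c1 hadj1 hinj1 d1 b hbd1
  obtain ⟨a2, d3, hd3, ha2, hca2, hint3⟩ := corridor ht c1 hadj1 hinj1 (d1+d2) cv hcv
  have hb1 : t+1 ≤ d1 ∧ d1 ≤ t+2 := by rcases hd1 with h|h <;> omega
  have hb2 : t+1 ≤ d2 ∧ d2 ≤ t+2 := by rcases hd2 with h|h <;> omega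
  have hb3 : t+1 ≤ d3 ∧ d3 ≤ t+2 := by rcases hd3 with h|h <;> omega
  rcases lt_trichotomy (d1+d2+d3) n with hD | hD | hD
  · -- D = n-1; fourth corridor gives a contradiction
    exfalso
    obtain ⟨b4, d4, hd4, -, -, hint4⟩ := corridor ht c1 hadj1 hinj1 (d1+d2+d3) a2 ha2
    have hb4 : t+1 ≤ d4 := by rcases hd4 with h|h <;> omega
    have hDn : d1+d2+d3+1 = n := by omega
    exact hint4 1 (by omega) (by omega) a (by rw [hDn]; exact hc1n)
  · -- D = n : triangle!
    have ha2a : a2 = a := by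
      rw [hD] at ha2
      rw [ha2] at hc1n
      exact Sum.inl.inj hc1n
    exact ⟨a, b, cv, hab, hbc, by rwa [ha2a] at hca2⟩
  · -- D > n : the third corridor interior passes through `c1 n`, contradiction
    exfalso
    have h12 : d1 + d2 < n := by omega
    have hm1 : 0 < n - (d1+d2) := by omega
    have hm2 : n - (d1+d2) < d3 := by omega
    exact hint3 (n - (d1+d2)) hm1 hm2 a (by rw [show d1+d2+(n-(d1+d2)) = n from by omega]; exact hc1n)

end Backward

section Forward

variable {G : SimpleGraph V} {t : ℕ}

/-- ascending walk through the `Fin t` corridor from internal vertex `k` to `sMax e`. -/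
def walkA (e : G.edgeSet) : (m k : ℕ) → (h : k + m + 1 = t) →
    (DoubleSubdiv G t).Walk (Sum.inr (e, Sum.inl ⟨k, by omega⟩)) (Sum.inl (sMax (e : Sym2 V)))
  | 0, k, h =>
      SimpleGraph.Walk.cons
        ((adj_inl_inrA.mpr (Or.inr ⟨show k = t - 1 by omega, rfl⟩)).symm)
        SimpleGraph.Walk.nil
  | (m+1), k, h =>
      SimpleGraph.Walk.cons
        (adj_inrA_inrA.mpr ⟨rfl, Or.inl rfl⟩ :
          (DoubleSubdiv G t).Adj (Sum.inr (e, Sum.inl ⟨k, by omega⟩))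
            (Sum.inr (e, Sum.inl ⟨k+1, by omega⟩)))
        (walkA e m (k+1) (by omega))

/-- ascending walk through the `Fin (t+1)` corridor. -/
def walkB (e : G.edgeSet) : (m k : ℕ) → (h : k + m = t) →
    (DoubleSubdiv G t).Walk (Sum.inr (e, Sum.inr ⟨k, by omega⟩)) (Sum.inl (sMax (e : Sym2 V)))
  | 0, k, h =>
      SimpleGraph.Walk.cons
        ((adj_inl_inrB.mpr (Or.inr ⟨show k = t by omega, rfl⟩)).symm)
        SimpleGraph.Walk.nil
  | (m+1), k, h =>
      SimpleGraph.Walk.cons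
        (adj_inrB_inrB.mpr ⟨rfl, Or.inl rfl⟩ :
          (DoubleSubdiv G t).Adj (Sum.inr (e, Sum.inr ⟨k, by omega⟩))
            (Sum.inr (e, Sum.inr ⟨k+1, by omega⟩)))
        (walkB e m (k+1) (by omega))

lemma walkA_length (e : G.edgeSet) : ∀ m k (h : k + m + 1 = t), (walkA e m k h).length = m + 1
  | 0, k, h => rfl
  | (m+1), k, h => by
      rw [walkA]
      simp [walkA_length e m (k+1) (by omega)]

lemma walkB_length (e : G.edgeSet) : ∀ m k (h : k + m = t), (walkB e m k h).length = m + 1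
  | 0, k, h => rfl
  | (m+1), k, h => by
      rw [walkB]
      simp [walkB_length e m (k+1) (by omega)]

lemma walkA_support (e : G.edgeSet) : ∀ m k (h : k + m + 1 = t), ∀ x ∈ (walkA e m k h).support,
    x = Sum.inl (sMax (e : Sym2 V)) ∨
      ∃ j : Fin t, k ≤ j.val ∧ x = Sum.inr (e, Sum.inl j)
  | 0, k, h => by
      intro x hx
      rw [walkA] at hx
      simp only [SimpleGraph.Walk.support_cons, SimpleGraph.Walk.support_nil,
        List.mem_cons, List.mem_singleton] at hx
      rcases hx with rfl | rfl | h'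
      · exact Or.inr ⟨⟨k, by omega⟩, le_refl _, rfl⟩
      · exact Or.inl rfl
      · exact absurd h' List.not_mem_nil
  | (m+1), k, h => by
      intro x hx
      rw [walkA] at hx
      simp only [SimpleGraph.Walk.support_cons, List.mem_cons] at hx
      rcases hx with rfl | hx
      · exact Or.inr ⟨⟨k, by omega⟩, le_refl _, rfl⟩
      · rcases walkA_support e m (k+1) (by omega) x hx with h' | ⟨j, hj1, hj2⟩
        · exact Or.inl h'
        · exact Or.inr ⟨j, by omega, hj2⟩

lemma walkB_support (e : G.edgeSet) : ∀ m k (h : k + m = t), ∀ x ∈ (walkB e m k h).support,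
    x = Sum.inl (sMax (e : Sym2 V)) ∨
      ∃ j : Fin (t+1), k ≤ j.val ∧ x = Sum.inr (e, Sum.inr j)
  | 0, k, h => by
      intro x hx
      rw [walkB] at hx
      simp only [SimpleGraph.Walk.support_cons, SimpleGraph.Walk.support_nil,
        List.mem_cons, List.mem_singleton] at hx
      rcases hx with rfl | rfl | h'
      · exact Or.inr ⟨⟨k, by omega⟩, le_refl _, rfl⟩
      · exact Or.inl rfl
      · exact absurd h' List.not_mem_nil
  | (m+1), k, h => by
      intro x hx
      rw [walkB] at hx
      simp only [SimpleGraph.Walk.support_cons, List.mem_cons] at hx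
      rcases hx with rfl | hx
      · exact Or.inr ⟨⟨k, by omega⟩, le_refl _, rfl⟩
      · rcases walkB_support e m (k+1) (by omega) x hx with h' | ⟨j, hj1, hj2⟩
        · exact Or.inl h'
        · exact Or.inr ⟨j, by omega, hj2⟩

lemma walkA_support_nodup (e : G.edgeSet) : ∀ m k (h : k + m + 1 = t), (walkA e m k h).support.Nodup
  | 0, k, h => by
      rw [walkA]
      simp
  | (m+1), k, h => by
      rw [walkA]
      rw [SimpleGraph.Walk.support_cons, List.nodup_cons]
      refine ⟨?_, walkA_support_nodup e m (k+1) (by omega)⟩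
      intro hmem
      rcases walkA_support e m (k+1) (by omega) _ hmem with h' | ⟨j, hj1, hj2⟩
      · exact nomatch h'
      · rw [Sum.inr.injEq, Prod.mk.injEq, Sum.inl.injEq] at hj2
        have := hj2.2
        rw [← this] at hj1
        simp at hj1

lemma walkB_support_nodup (e : G.edgeSet) : ∀ m k (h : k + m = t), (walkB e m k h).support.Nodup
  | 0, k, h => by
      rw [walkB]
      simp
  | (m+1), k, h => by
      rw [walkB]
      rw [SimpleGraph.Walk.support_cons, List.nodup_cons]
      refine ⟨?_, walkB_support_nodup e m (k+1) (by omega)⟩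
      intro hmem
      rcases walkB_support e m (k+1) (by omega) _ hmem with h' | ⟨j, hj1, hj2⟩
      · exact nomatch h'
      · rw [Sum.inr.injEq, Prod.mk.injEq, Sum.inr.injEq] at hj2
        have := hj2.2
        rw [← this] at hj1
        simp at hj1

lemma walkA_edges (e : G.edgeSet) : ∀ m k (h : k + m + 1 = t), ∀ d ∈ (walkA e m k h).edges,
    ∃ p, Sum.inr (e, p) ∈ d
  | 0, k, h => by
      intro d hd
      rw [walkA] at hd
      simp only [SimpleGraph.Walk.edges_cons, SimpleGraph.Walk.edges_nil,
        List.mem_singleton] at hd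
      subst hd
      exact ⟨_, Sym2.mem_mk_left _ _⟩
  | (m+1), k, h => by
      intro d hd
      rw [walkA] at hd
      simp only [SimpleGraph.Walk.edges_cons, List.mem_cons] at hd
      rcases hd with rfl | hd
      · exact ⟨_, Sym2.mem_mk_left _ _⟩
      · exact walkA_edges e m (k+1) (by omega) d hd

lemma walkB_edges (e : G.edgeSet) : ∀ m k (h : k + m = t), ∀ d ∈ (walkB e m k h).edges,
    ∃ p, Sum.inr (e, p) ∈ d
  | 0, k, h => by
      intro d hd
      rw [walkB] at hd
      simp only [SimpleGraph.Walk.edges_cons, SimpleGraph.Walk.edges_nil,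
        List.mem_singleton] at hd
      subst hd
      exact ⟨_, Sym2.mem_mk_left _ _⟩
  | (m+1), k, h => by
      intro d hd
      rw [walkB] at hd
      simp only [SimpleGraph.Walk.edges_cons, List.mem_cons] at hd
      rcases hd with rfl | hd
      · exact ⟨_, Sym2.mem_mk_left _ _⟩
      · exact walkB_edges e m (k+1) (by omega) d hd

end Forward

section Forward2

variable {G : SimpleGraph V} {t : ℕ}

def shortWalk (e : G.edgeSet) (ht' : 0 < t) :
    (DoubleSubdiv G t).Walk (Sum.inl (sMin (e : Sym2 V))) (Sum.inl (sMax (e : Sym2 V))) :=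
  SimpleGraph.Walk.cons
    (adj_inl_inrA.mpr (Or.inl ⟨rfl, rfl⟩) :
      (DoubleSubdiv G t).Adj (Sum.inl (sMin (e : Sym2 V))) (Sum.inr (e, Sum.inl ⟨0, ht'⟩)))
    (walkA e (t-1) 0 (by omega))

def longWalk (e : G.edgeSet) :
    (DoubleSubdiv G t).Walk (Sum.inl (sMin (e : Sym2 V))) (Sum.inl (sMax (e : Sym2 V))) :=
  SimpleGraph.Walk.cons
    (adj_inl_inrB.mpr (Or.inl ⟨rfl, rfl⟩) :
      (DoubleSubdiv G t).Adj (Sum.inl (sMin (e : Sym2 V))) (Sum.inr (e, Sum.inr ⟨0, by omega⟩)))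
    (walkB e t 0 (by omega))

lemma shortWalk_length (e : G.edgeSet) (ht' : 0 < t) : (shortWalk e ht').length = t + 1 := by
  rw [shortWalk, SimpleGraph.Walk.length_cons, walkA_length]
  omega

lemma longWalk_length (e : G.edgeSet) : (longWalk (t := t) e).length = t + 2 := by
  rw [longWalk, SimpleGraph.Walk.length_cons, walkB_length]

lemma shortWalk_support (e : G.edgeSet) (ht' : 0 < t) :
    ∀ x ∈ (shortWalk e ht').support,
      x = Sum.inl (sMin (e : Sym2 V)) ∨ x = Sum.inl (sMax (e : Sym2 V)) ∨
        ∃ j : Fin t, x = Sum.inr (e, Sum.inl j) := by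
  intro x hx
  rw [shortWalk, SimpleGraph.Walk.support_cons, List.mem_cons] at hx
  rcases hx with rfl | hx
  · exact Or.inl rfl
  · rcases walkA_support e (t-1) 0 (by omega) x hx with h | ⟨j, -, hj⟩
    · exact Or.inr (Or.inl h)
    · exact Or.inr (Or.inr ⟨j, hj⟩)

lemma longWalk_support (e : G.edgeSet) :
    ∀ x ∈ (longWalk (t := t) e).support,
      x = Sum.inl (sMin (e : Sym2 V)) ∨ x = Sum.inl (sMax (e : Sym2 V)) ∨
        ∃ j : Fin (t+1), x = Sum.inr (e, Sum.inr j) := by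
  intro x hx
  rw [longWalk, SimpleGraph.Walk.support_cons, List.mem_cons] at hx
  rcases hx with rfl | hx
  · exact Or.inl rfl
  · rcases walkB_support e t 0 (by omega) x hx with h | ⟨j, -, hj⟩
    · exact Or.inr (Or.inl h)
    · exact Or.inr (Or.inr ⟨j, hj⟩)

lemma shortWalk_tail_support (e : G.edgeSet) (ht' : 0 < t) :
    ∀ x ∈ (shortWalk e ht').support.tail,
      x = Sum.inl (sMax (e : Sym2 V)) ∨ ∃ j : Fin t, x = Sum.inr (e, Sum.inl j) := by
  intro x hx
  rw [shortWalk, SimpleGraph.Walk.support_cons, List.tail_cons] at hx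
  rcases walkA_support e (t-1) 0 (by omega) x hx with h | ⟨j, -, hj⟩
  · exact Or.inl h
  · exact Or.inr ⟨j, hj⟩

lemma shortWalk_support_nodup (e : G.edgeSet) (ht' : 0 < t) :
    (shortWalk e ht').support.Nodup := by
  rw [shortWalk, SimpleGraph.Walk.support_cons, List.nodup_cons]
  refine ⟨?_, walkA_support_nodup e (t-1) 0 (by omega)⟩
  intro hmem
  rcases walkA_support e (t-1) 0 (by omega) _ hmem with h | ⟨j, -, hj⟩
  · exact sMin_ne_sMax e (Sum.inl.inj h)
  · exact nomatch hj

lemma longWalk_support_nodup (e : G.edgeSet) :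
    (longWalk (t := t) e).support.Nodup := by
  rw [longWalk, SimpleGraph.Walk.support_cons, List.nodup_cons]
  refine ⟨?_, walkB_support_nodup e t 0 (by omega)⟩
  intro hmem
  rcases walkB_support e t 0 (by omega) _ hmem with h | ⟨j, -, hj⟩
  · exact sMin_ne_sMax e (Sum.inl.inj h)
  · exact nomatch hj

lemma shortWalk_edges (e : G.edgeSet) (ht' : 0 < t) :
    ∀ d ∈ (shortWalk e ht').edges, ∃ p, Sum.inr (e, p) ∈ d := by
  intro d hd
  rw [shortWalk, SimpleGraph.Walk.edges_cons, List.mem_cons] at hd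
  rcases hd with rfl | hd
  · exact ⟨_, Sym2.mem_mk_right _ _⟩
  · exact walkA_edges e (t-1) 0 (by omega) d hd

lemma longWalk_edges (e : G.edgeSet) :
    ∀ d ∈ (longWalk (t := t) e).edges, ∃ p, Sum.inr (e, p) ∈ d := by
  intro d hd
  rw [longWalk, SimpleGraph.Walk.edges_cons, List.mem_cons] at hd
  rcases hd with rfl | hd
  · exact ⟨_, Sym2.mem_mk_right _ _⟩
  · exact walkB_edges e t 0 (by omega) d hd

lemma mem_support_of_mem_edges' {W' : Type*} {H : SimpleGraph W'} {u v z : W'}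
    {p : H.Walk u v} {d : Sym2 W'} (hd : d ∈ p.edges) (hz : z ∈ d) : z ∈ p.support := by
  induction d with
  | _ x y =>
    rcases Sym2.mem_iff.1 hz with rfl | rfl
    · exact SimpleGraph.Walk.fst_mem_support_of_mem_edges p hd
    · exact SimpleGraph.Walk.snd_mem_support_of_mem_edges p hd

end Forward2

section Forward3

variable {G : SimpleGraph V} {t : ℕ}

lemma forward_dir (ht : 2 ≤ t) {a b c : V} (h1 : a < b) (h2 : b < c)
    (hab : G.Adj a b) (hbc : G.Adj b c) (hac : G.Adj a c) :
    ∃ (x : V ⊕ (G.edgeSet × (Fin t ⊕ Fin (t + 1)))) (w : (DoubleSubdiv G t).Walk x x),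
      w.IsCycle ∧ w.length = 3*t+4 := by
  have ht' : 0 < t := by omega
  set e1 : G.edgeSet := ⟨s(a,b), G.mem_edgeSet.mpr hab⟩ with he1
  set e2 : G.edgeSet := ⟨s(b,c), G.mem_edgeSet.mpr hbc⟩ with he2
  set e3 : G.edgeSet := ⟨s(a,c), G.mem_edgeSet.mpr hac⟩ with he3
  have hmin1 : sMin (e1 : Sym2 V) = a := by rw [he1]; simp [min_eq_left h1.le]
  have hmax1 : sMax (e1 : Sym2 V) = b := by rw [he1]; simp [max_eq_right h1.le]
  have hmin2 : sMin (e2 : Sym2 V) = b := by rw [he2]; simp [min_eq_left h2.le]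
  have hmax2 : sMax (e2 : Sym2 V) = c := by rw [he2]; simp [max_eq_right h2.le]
  have h13 : a < c := h1.trans h2
  have hmin3 : sMin (e3 : Sym2 V) = a := by rw [he3]; simp [min_eq_left h13.le]
  have hmax3 : sMax (e3 : Sym2 V) = c := by rw [he3]; simp [max_eq_right h13.le]
  have hne12 : e1 ≠ e2 := by
    intro h
    rw [he1, he2, Subtype.mk.injEq, Sym2.eq_iff] at h
    rcases h with ⟨h', -⟩ | ⟨h', -⟩
    · exact h1.ne h'
    · exact h13.ne h'
  have hne13 : e1 ≠ e3 := by
    intro h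
    rw [he1, he3, Subtype.mk.injEq, Sym2.eq_iff] at h
    rcases h with ⟨-, h'⟩ | ⟨h', -⟩
    · exact h2.ne h'
    · exact h13.ne h'
  have hne23 : e2 ≠ e3 := by
    intro h
    rw [he2, he3, Subtype.mk.injEq, Sym2.eq_iff] at h
    rcases h with ⟨h', -⟩ | ⟨-, h'⟩
    · exact h1.ne h'.symm
    · exact h13.ne h'.symm
  set P1 : (DoubleSubdiv G t).Walk (Sum.inl a) (Sum.inl b) :=
    (shortWalk e1 ht').copy (congrArg Sum.inl hmin1) (congrArg Sum.inl hmax1) with hP1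
  set P2 : (DoubleSubdiv G t).Walk (Sum.inl b) (Sum.inl c) :=
    (shortWalk e2 ht').copy (congrArg Sum.inl hmin2) (congrArg Sum.inl hmax2) with hP2
  set Q3 : (DoubleSubdiv G t).Walk (Sum.inl a) (Sum.inl c) :=
    (longWalk e3).copy (congrArg Sum.inl hmin3) (congrArg Sum.inl hmax3) with hQ3
  set P3 : (DoubleSubdiv G t).Walk (Sum.inl c) (Sum.inl a) := Q3.reverse with hP3
  set w : (DoubleSubdiv G t).Walk (Sum.inl a) (Sum.inl a) :=
    P1.append (P2.append P3) with hw
  have hlength : w.length = 3*t+4 := by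
    rw [hw, SimpleGraph.Walk.length_append, SimpleGraph.Walk.length_append, hP1, hP2, hP3,
      SimpleGraph.Walk.length_reverse, hQ3, SimpleGraph.Walk.length_copy,
      SimpleGraph.Walk.length_copy, SimpleGraph.Walk.length_copy,
      shortWalk_length, shortWalk_length, longWalk_length]
    omega
  -- support tail characterizations
  have hT1 : ∀ x ∈ P1.support.tail,
      x = Sum.inl b ∨ ∃ j : Fin t, x = Sum.inr (e1, Sum.inl j) := by
    intro x hx
    rw [hP1, SimpleGraph.Walk.support_copy] at hx
    rcases shortWalk_tail_support e1 ht' x hx with h | h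
    · rw [hmax1] at h; exact Or.inl h
    · exact Or.inr h
  have hT2 : ∀ x ∈ P2.support.tail,
      x = Sum.inl c ∨ ∃ j : Fin t, x = Sum.inr (e2, Sum.inl j) := by
    intro x hx
    rw [hP2, SimpleGraph.Walk.support_copy] at hx
    rcases shortWalk_tail_support e2 ht' x hx with h | h
    · rw [hmax2] at h; exact Or.inl h
    · exact Or.inr h
  have hP3nodup : P3.support.Nodup := by
    rw [hP3, SimpleGraph.Walk.support_reverse, List.nodup_reverse, hQ3,
      SimpleGraph.Walk.support_copy]
    exact longWalk_support_nodup e3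
  have hQ3mem : ∀ x ∈ P3.support,
      x = Sum.inl a ∨ x = Sum.inl c ∨ ∃ j : Fin (t+1), x = Sum.inr (e3, Sum.inr j) := by
    intro x hx
    rw [hP3, SimpleGraph.Walk.support_reverse, List.mem_reverse, hQ3,
      SimpleGraph.Walk.support_copy] at hx
    rcases longWalk_support e3 x hx with h | h | h
    · rw [hmin3] at h; exact Or.inl h
    · rw [hmax3] at h; exact Or.inr (Or.inl h)
    · exact Or.inr (Or.inr h)
  have hT3 : ∀ x ∈ P3.support.tail,
      x = Sum.inl a ∨ ∃ j : Fin (t+1), x = Sum.inr (e3, Sum.inr j) := by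
    intro x hx
    have hxs : x ∈ P3.support := by
      rw [SimpleGraph.Walk.support_eq_cons P3]
      exact List.mem_cons_of_mem _ hx
    have hxc : x ≠ Sum.inl c := by
      intro h
      have := SimpleGraph.Walk.support_eq_cons P3
      rw [this, List.nodup_cons] at hP3nodup
      subst h
      exact hP3nodup.1 hx
    rcases hQ3mem x hxs with h | h | h
    · exact Or.inl h
    · exact absurd h hxc
    · exact Or.inr h
  -- edges
  have hE1 : ∀ d ∈ P1.edges, ∃ p, Sum.inr (e1, p) ∈ d := by
    intro d hd
    rw [hP1, SimpleGraph.Walk.edges_copy] at hd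
    exact shortWalk_edges e1 ht' d hd
  have hE2 : ∀ d ∈ P2.edges, ∃ p, Sum.inr (e2, p) ∈ d := by
    intro d hd
    rw [hP2, SimpleGraph.Walk.edges_copy] at hd
    exact shortWalk_edges e2 ht' d hd
  have hS2 : ∀ x ∈ P2.support,
      x = Sum.inl b ∨ x = Sum.inl c ∨ ∃ j : Fin t, x = Sum.inr (e2, Sum.inl j) := by
    intro x hx
    rw [hP2, SimpleGraph.Walk.support_copy] at hx
    rcases shortWalk_support e2 ht' x hx with h | h | h
    · rw [hmin2] at h; exact Or.inl h
    · rw [hmax2] at h; exact Or.inr (Or.inl h)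
    · exact Or.inr (Or.inr h)
  refine ⟨Sum.inl a, w, ?_, hlength⟩
  rw [SimpleGraph.Walk.isCycle_def]
  refine ⟨?_, ?_, ?_⟩
  · -- trail
    rw [SimpleGraph.Walk.isTrail_def, hw, SimpleGraph.Walk.edges_append,
      SimpleGraph.Walk.edges_append, List.nodup_append, List.nodup_append]
    have hn1 : P1.edges.Nodup := by
      rw [hP1, SimpleGraph.Walk.edges_copy]
      exact (SimpleGraph.Walk.IsPath.mk' (shortWalk_support_nodup e1 ht')).edges_nodup
    have hn2 : P2.edges.Nodup := by
      rw [hP2, SimpleGraph.Walk.edges_copy]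
      exact (SimpleGraph.Walk.IsPath.mk' (shortWalk_support_nodup e2 ht')).edges_nodup
    have hn3 : P3.edges.Nodup := by
      rw [hP3, SimpleGraph.Walk.edges_reverse, List.nodup_reverse, hQ3,
        SimpleGraph.Walk.edges_copy]
      exact (SimpleGraph.Walk.IsPath.mk' (longWalk_support_nodup e3)).edges_nodup
    have hd23 : P2.edges.Disjoint P3.edges := by
      intro d hd2 hd3
      obtain ⟨p, hp⟩ := hE2 d hd2
      have := mem_support_of_mem_edges' hd3 hp
      rcases hQ3mem _ this with h | h | ⟨j, h⟩
      · exact nomatch h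
      · exact nomatch h
      · rw [Sum.inr.injEq, Prod.mk.injEq] at h
        exact hne23 h.1
    refine ⟨hn1, ⟨hn2, hn3, fun _ ha _ hb hab => hd23 ha (hab ▸ hb)⟩, ?_⟩
    intro d hd1 d' hd23' hdd; subst hdd
    obtain ⟨p, hp⟩ := hE1 d hd1
    rcases List.mem_append.1 hd23' with hd | hd
    · have := mem_support_of_mem_edges' hd hp
      rcases hS2 _ this with h | h | ⟨j, h⟩
      · exact nomatch h
      · exact nomatch h
      · rw [Sum.inr.injEq, Prod.mk.injEq] at h
        exact hne12 h.1
    · have := mem_support_of_mem_edges' hd hp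
      rcases hQ3mem _ this with h | h | ⟨j, h⟩
      · exact nomatch h
      · exact nomatch h
      · rw [Sum.inr.injEq, Prod.mk.injEq] at h
        exact hne13 h.1
  · -- not nil
    intro h
    have := congrArg SimpleGraph.Walk.length h
    rw [hlength] at this
    simp at this
  · -- support tail nodup
    have htail : w.support.tail = P1.support.tail ++ (P2.support.tail ++ P3.support.tail) := by
      rw [hw, SimpleGraph.Walk.support_append, SimpleGraph.Walk.support_append,
        List.tail_append_of_ne_nil (SimpleGraph.Walk.support_ne_nil _),
        List.tail_append_of_ne_nil (SimpleGraph.Walk.support_ne_nil _)]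
    rw [htail, List.nodup_append, List.nodup_append]
    have hn1 : P1.support.tail.Nodup := by
      refine List.Nodup.sublist (List.tail_sublist _) ?_
      rw [hP1, SimpleGraph.Walk.support_copy]
      exact shortWalk_support_nodup e1 ht'
    have hn2 : P2.support.tail.Nodup := by
      refine List.Nodup.sublist (List.tail_sublist _) ?_
      rw [hP2, SimpleGraph.Walk.support_copy]
      exact shortWalk_support_nodup e2 ht'
    have hn3 : P3.support.tail.Nodup :=
      List.Nodup.sublist (List.tail_sublist _) hP3nodup
    have hd23 : P2.support.tail.Disjoint P3.support.tail := by
      intro x hx2 hx3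
      rcases hT2 x hx2 with h | ⟨j, h⟩ <;> rcases hT3 x hx3 with h' | ⟨j', h'⟩
      · rw [h] at h'; exact h13.ne (Sum.inl.inj h').symm
      · rw [h] at h'; exact nomatch h'
      · rw [h] at h'; exact nomatch h'
      · rw [h] at h'
        rw [Sum.inr.injEq, Prod.mk.injEq] at h'
        exact nomatch h'.2
    refine ⟨hn1, ⟨hn2, hn3, fun _ ha _ hb hab => hd23 ha (hab ▸ hb)⟩, ?_⟩
    intro x hx1 x' hx23 hxx; subst hxx
    rcases hT1 x hx1 with h | ⟨j, h⟩
    · rcases List.mem_append.1 hx23 with hx | hx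
      · rcases hT2 x hx with h' | ⟨j', h'⟩
        · rw [h] at h'; exact h2.ne (Sum.inl.inj h')
        · rw [h] at h'; exact nomatch h'
      · rcases hT3 x hx with h' | ⟨j', h'⟩
        · rw [h] at h'; exact h1.ne (Sum.inl.inj h').symm
        · rw [h] at h'; exact nomatch h'
    · rcases List.mem_append.1 hx23 with hx | hx
      · rcases hT2 x hx with h' | ⟨j', h'⟩
        · rw [h] at h'; exact nomatch h'
        · rw [h] at h'
          rw [Sum.inr.injEq, Prod.mk.injEq] at h'
          exact hne12 h'.1
      · rcases hT3 x hx with h' | ⟨j', h'⟩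
        · rw [h] at h'; exact nomatch h'
        · rw [h] at h'
          rw [Sum.inr.injEq, Prod.mk.injEq] at h'
          exact nomatch h'.2

end Forward3

/-- for `t ≥ 2`, `G` contains a triangle iff `G_{t'}` contains a cycle of
length `3(t+1)+1`. -/
theorem stmt4 (G : SimpleGraph V) (t : ℕ) (ht : 2 ≤ t) :
    (∃ a b c : V, G.Adj a b ∧ G.Adj b c ∧ G.Adj c a) ↔
    (∃ (x : V ⊕ (G.edgeSet × (Fin t ⊕ Fin (t + 1)))) (w : (DoubleSubdiv G t).Walk x x),
      w.IsCycle ∧ w.length = 3 * (t + 1) + 1) := by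
  constructor
  · rintro ⟨a, b, c, hab, hbc, hca⟩
    -- sort the triangle
    have key : ∃ a b c : V, a < b ∧ b < c ∧ G.Adj a b ∧ G.Adj b c ∧ G.Adj a c := by
      rcases lt_trichotomy a b with h1 | h1 | h1
      · rcases lt_trichotomy b c with h2 | h2 | h2
        · exact ⟨a, b, c, h1, h2, hab, hbc, hca.symm⟩
        · exact absurd h2 hbc.ne
        · rcases lt_trichotomy a c with h3 | h3 | h3
          · exact ⟨a, c, b, h3, h2, hca.symm, hbc.symm, hab⟩
          · exact absurd h3 hca.ne'
          · exact ⟨c, a, b, h3, h1, hca, hab, hbc.symm⟩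
      · exact absurd h1 hab.ne
      · rcases lt_trichotomy a c with h2 | h2 | h2
        · exact ⟨b, a, c, h1, h2, hab.symm, hca.symm, hbc⟩
        · exact absurd h2 hca.ne'
        · rcases lt_trichotomy b c with h3 | h3 | h3
          · exact ⟨b, c, a, h3, h2, hbc, hca, hab.symm⟩
          · exact absurd h3 hbc.ne
          · exact ⟨c, b, a, h3, h1, hbc.symm, hab.symm, hca⟩
    obtain ⟨a', b', c', h1, h2, hab', hbc', hac'⟩ := key
    obtain ⟨x, w, hcyc, hlen⟩ := forward_dir ht h1 h2 hab' hbc' hac'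
    exact ⟨x, w, hcyc, by omega⟩
  · rintro ⟨x, w, hcyc, hlen⟩
    exact backward_dir ht hcyc (by omega)
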